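/- Let (F_ε)_ε be as above (C¹, moderate bounds, logarithmically moderate ∂_x F_ε) and let x_ε, y_ε solve the same ODE x' = F_ε(t,x) with initial data x_{0,ε} and x_{0,ε} + n_ε respectively, where (n_ε)_ε is negligible (for every q, |n_ε| ≤ c_q ε^q). Then (x_ε − y_ε)_ε is negligible: for every q ∈ ℕ there is C_q with sup_{t∈[0,T]} |x_ε(t) − y_ε(t)| ≤ C_q ε^q. -/

import Mathlib

open Set

/-- for a net of `C¹` vector fields with moderate bounds and logarithmically
moderate spatial derivatives, a negligible perturbation of the initial data produces a
negligible perturbation of the net of ODE solutions. -/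
theorem negligible_perturbation_of_ode_solutions
    (T : ℝ) (hT : 0 < T) (c : ℝ) (hc : 0 < c) (N : ℕ)
    (F F' : ℝ → ℝ → ℝ → ℝ)
    (hFc : ∀ ε ∈ Ioc (0:ℝ) 1, Continuous fun p : ℝ × ℝ => F ε p.1 p.2)
    (hFbound : ∀ ε ∈ Ioc (0:ℝ) 1, ∀ t x, |F ε t x| ≤ c * ε ^ (-(N:ℤ)))
    (hF' : ∀ ε ∈ Ioc (0:ℝ) 1, ∀ t x, HasDerivAt (F ε t) (F' ε t x) x)
    (hF'log : ∀ ε ∈ Ioc (0:ℝ) 1, ∀ t x, |F' ε t x| ≤ c * |Real.log ε|)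
    (x y : ℝ → ℝ → ℝ) (x₀ nn : ℝ → ℝ)
    (hinitx : ∀ ε ∈ Ioc (0:ℝ) 1, x ε 0 = x₀ ε)
    (hinity : ∀ ε ∈ Ioc (0:ℝ) 1, y ε 0 = x₀ ε + nn ε)
    (hneg : ∀ q : ℕ, ∃ cq > 0, ∀ ε ∈ Ioc (0:ℝ) 1, |nn ε| ≤ cq * ε ^ q)
    (hsolx : ∀ ε ∈ Ioc (0:ℝ) 1, ∀ t ∈ Icc (0:ℝ) T, HasDerivAt (x ε) (F ε t (x ε t)) t)
    (hsoly : ∀ ε ∈ Ioc (0:ℝ) 1, ∀ t ∈ Icc (0:ℝ) T, HasDerivAt (y ε) (F ε t (y ε t)) t) :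
    ∀ q : ℕ, ∃ Cq > 0, ∀ ε ∈ Ioc (0:ℝ) 1, ∀ t ∈ Icc (0:ℝ) T,
      |x ε t - y ε t| ≤ Cq * ε ^ q := by
  intro q
  set m : ℕ := q + ⌈c * T⌉₊ with hm
  obtain ⟨cq, hcq, hcqle⟩ := hneg m
  refine ⟨cq, hcq, ?_⟩
  intro ε hε t ht
  have hε0 : (0:ℝ) < ε := hε.1
  have hε1 : ε ≤ 1 := hε.2
  -- Lipschitz constant
  have hK0 : (0:ℝ) ≤ c * |Real.log ε| := mul_nonneg hc.le (abs_nonneg _)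
  set K : NNReal := ⟨c * |Real.log ε|, hK0⟩ with hKdef
  have hlip : ∀ s : ℝ, LipschitzWith K (F ε s) := by
    intro s
    apply LipschitzWith.of_dist_le_mul
    intro a b
    rw [dist_eq_norm, dist_eq_norm]
    exact convex_univ.norm_image_sub_le_of_norm_hasDerivWithin_le
      (fun u _ => (hF' ε hε s u).hasDerivWithinAt)
      (fun u _ => hF'log ε hε s u) trivial trivial
  -- Grönwall
  have hcontx : ContinuousOn (x ε) (Icc 0 T) :=
    fun s hs => (hsolx ε hε s hs).continuousAt.continuousWithinAt
  have hconty : ContinuousOn (y ε) (Icc 0 T) :=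
    fun s hs => (hsoly ε hε s hs).continuousAt.continuousWithinAt
  have ha : dist (x ε 0) (y ε 0) ≤ |nn ε| := by
    rw [hinitx ε hε, hinity ε hε, Real.dist_eq]
    simp [abs_sub_comm]
  have hgron := dist_le_of_trajectories_ODE (v := F ε) (K := K) hlip hcontx
    (fun s hs => ((hsolx ε hε s (Ico_subset_Icc_self hs)).hasDerivWithinAt)) hconty
    (fun s hs => ((hsoly ε hε s (Ico_subset_Icc_self hs)).hasDerivWithinAt)) ha t ht
  rw [Real.dist_eq] at hgron
  -- bound the exponential
  have hlogle : |Real.log ε| = -Real.log ε := abs_of_nonpos (Real.log_nonpos hε0.le hε1)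
  have hKt : (K : ℝ) * (t - 0) ≤ Real.log ε * (-(c * T)) := by
    rw [hKdef]
    simp only [NNReal.coe_mk, sub_zero, hlogle]
    have h1 : c * -Real.log ε * t ≤ c * -Real.log ε * T :=
      mul_le_mul_of_nonneg_left ht.2 (mul_nonneg hc.le (by linarith [Real.log_nonpos hε0.le hε1]))
    show c * -Real.log ε * t ≤ Real.log ε * -(c * T)
    nlinarith [h1]
  have hexp : Real.exp ((K : ℝ) * (t - 0)) ≤ ε ^ (-(c * T)) := by
    rw [Real.rpow_def_of_pos hε0]
    exact Real.exp_le_exp.2 hKt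
  have hmain : |x ε t - y ε t| ≤ cq * ε ^ m * ε ^ (-(c * T)) := by
    calc |x ε t - y ε t| ≤ |nn ε| * Real.exp ((K : ℝ) * (t - 0)) := hgron
    _ ≤ (cq * ε ^ m) * ε ^ (-(c * T)) := by
        apply mul_le_mul (hcqle ε hε) hexp (Real.exp_pos _).le
        positivity
  refine hmain.trans ?_
  rw [mul_assoc]
  apply mul_le_mul_of_nonneg_left _ hcq.le
  have : (ε : ℝ) ^ m * ε ^ (-(c * T)) = ε ^ ((m : ℝ) - c * T) := by
    rw [← Real.rpow_natCast ε m, ← Real.rpow_add hε0]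
    ring_nf
  rw [this, ← Real.rpow_natCast ε q]
  apply Real.rpow_le_rpow_of_exponent_ge hε0 hε1
  have : (c * T) ≤ (⌈c * T⌉₊ : ℝ) := Nat.le_ceil _
  have : ((m : ℕ) : ℝ) = (q : ℝ) + (⌈c * T⌉₊ : ℝ) := by rw [hm]; push_cast; ring
  linarith [Nat.le_ceil (c * T)]
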